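/- For any real g with 0 < g < 1 and g ≠ 1/2, the real number p = (g − √(g(1−g)))/(2g − 1) lies in the open interval (0,1) and satisfies p^2/(p^2 + (1−p)^2) = g. -/

import Mathlib

/-- Inversion of the map p ↦ p²/(p² + (1-p)²) on (0,1). -/
theorem stmt_3 (g : ℝ) (hg0 : 0 < g) (hg1 : g < 1) (hgne : g ≠ 1 / 2)
    (p : ℝ) (hp : p = (g - Real.sqrt (g * (1 - g))) / (2 * g - 1)) :
    0 < p ∧ p < 1 ∧ p ^ 2 / (p ^ 2 + (1 - p) ^ 2) = g := by
  set s := Real.sqrt (g * (1 - g)) with hs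
  have hs2 : s ^ 2 = g * (1 - g) := Real.sq_sqrt (by nlinarith)
  have hs0 : 0 < s := Real.sqrt_pos.mpr (by nlinarith)
  have hd : (2 * g - 1) ≠ 0 := by
    intro h; apply hgne; linarith
  have hpe : p * (2 * g - 1) = g - s := by
    rw [hp]; exact div_mul_cancel₀ _ hd
  have hE : (g - p * (2 * g - 1)) ^ 2 = g * (1 - g) := by
    rw [hpe]; simpa using hs2
  have key : p ^ 2 * (1 - g) = g * (1 - p) ^ 2 := by
    have h0 : (p ^ 2 * (1 - g) - g * (1 - p) ^ 2) * (2 * g - 1) = 0 := by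
      linear_combination -hE
    rcases mul_eq_zero.mp h0 with h | h
    · linarith
    · exact absurd h hd
  have hp01 : 0 < p ∧ p < 1 := by
    rcases lt_or_gt_of_ne hgne with hlt | hgt
    · -- g < 1/2 : numerator and denominator both negative
      have hsg : g < s := by nlinarith [hs2, hs0]
      have hs1g : s < 1 - g := by nlinarith [hs2, hs0]
      constructor
      · nlinarith [hpe]
      · nlinarith [hpe]
    · -- g > 1/2
      have hsg : s < g := by nlinarith [hs2, hs0]
      have hs1g : 1 - g < s := by nlinarith [hs2, hs0]
      constructor
      · nlinarith [hpe]
      · nlinarith [hpe]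
  refine ⟨hp01.1, hp01.2, ?_⟩
  have hden : p ^ 2 + (1 - p) ^ 2 ≠ 0 := by nlinarith [hp01.1, sq_nonneg (1 - p)]
  field_simp
  nlinarith [key]
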